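/- Let X be an extremally disconnected regular Hausdorff space, Y a regular Hausdorff space, and φ : X → Set Y an usco mapping. Then for each dense subset A ⊆ X, each continuous selection for the restriction φ↾A can be extended to a continuous selection for φ. -/

import Mathlib

open Filter Topology Set

/-- Extension of densely defined continuous selections for usco mappings into
regular Hausdorff spaces, on extremally disconnected regular Hausdorff domains. -/
theorem selection_extension_of_extremallyDisconnected_regular
    {X Y : Type*} [TopologicalSpace X] [T2Space X] [RegularSpace X]
    [ExtremallyDisconnected X]
    [TopologicalSpace Y] [T2Space Y] [RegularSpace Y]
    (φ : X → Set Y)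
    (hne : ∀ x, (φ x).Nonempty)
    (hcomp : ∀ x, IsCompact (φ x))
    (husc : ∀ U : Set Y, IsOpen U → IsOpen {x | φ x ⊆ U})
    (A : Set X) (hA : Dense A)
    (g : A → Y) (hg : Continuous g) (hgsel : ∀ a : A, g a ∈ φ a) :
    ∃ f : X → Y, Continuous f ∧ (∀ x, f x ∈ φ x) ∧ ∀ a : A, f a = g a := by
  classical
  -- the filter of values of g near x
  set F : X → Filter Y := fun x => Filter.map g (Filter.comap (Subtype.val : A → X) (𝓝 x))
    with hFdef
  have hFne : ∀ x, (F x).NeBot := by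
    intro x
    exact (mem_closure_iff_comap_neBot.mp (hA x)).map g
  -- every open set containing φ x belongs to F x
  have hFmem : ∀ x (U : Set Y), IsOpen U → φ x ⊆ U → U ∈ F x := by
    intro x U hUo hUsub
    refine Filter.mem_map.2 (Filter.mem_comap.2 ⟨{x' | φ x' ⊆ U}, ?_, ?_⟩)
    · exact (husc U hUo).mem_nhds hUsub
    · intro a ha
      exact ha (hgsel a)
  have hFle : ∀ x, F x ≤ 𝓝ˢ (φ x) := by
    intro x
    rw [(hasBasis_nhdsSet (φ x)).ge_iff]
    rintro U ⟨hUo, hUsub⟩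
    exact hFmem x U hUo hUsub
  -- existence of a cluster point in φ x
  have hex : ∀ x, ∃ y ∈ φ x, ClusterPt y (F x) := by
    intro x
    by_contra h
    push_neg at h
    have hd : Disjoint (𝓝ˢ (φ x)) (F x) := by
      rw [(hcomp x).disjoint_nhdsSet_left]
      intro y hy
      exact not_not.mp fun hnd => h y hy (clusterPt_iff_not_disjoint.mpr hnd)
    have : Disjoint (F x) (F x) := hd.mono_left (hFle x)
    exact (hFne x).ne (disjoint_self.mp this)
  -- the "trace" sets
  set E : Set Y → Set X := fun V => closure (Subtype.val '' (g ⁻¹' V)) with hEdef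
  -- cluster points witness membership in E
  have hmem : ∀ x y (V : Set Y), V ∈ 𝓝 y → ClusterPt y (F x) → x ∈ E V := by
    intro x y V hV hcl
    rw [hEdef, mem_closure_iff_nhds]
    intro N hN
    have hset : g '' ((Subtype.val : A → X) ⁻¹' N) ∈ F x :=
      Filter.mem_map.2 (Filter.mem_comap.2 ⟨N, hN, Set.subset_preimage_image _ _⟩)
    obtain ⟨y', hy'V, a, haN, rfl⟩ := clusterPt_iff_nonempty.mp hcl hV hset
    exact ⟨a, haN, a, hy'V, rfl⟩
  -- for each open V, E V is the closure of an open set, and disjoint opens give disjoint E's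
  have hW : ∀ V : Set Y, IsOpen V → ∃ W : Set X, IsOpen W ∧
      (Subtype.val : A → X) ⁻¹' W = g ⁻¹' V ∧ E V = closure W := by
    intro V hV
    obtain ⟨W, hWo, hWpre⟩ := isOpen_induced_iff.mp (hV.preimage hg)
    refine ⟨W, hWo, hWpre, ?_⟩
    show closure (Subtype.val '' (g ⁻¹' V)) = closure W
    rw [← hWpre]
    have h1 : (Subtype.val : A → X) '' ((Subtype.val : A → X) ⁻¹' W) = W ∩ A := by
      rw [Set.image_preimage_eq_inter_range, Subtype.range_coe]
    rw [h1]
    apply subset_antisymm (closure_mono Set.inter_subset_left)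
    have := hA.open_subset_closure_inter hWo
    calc closure W ⊆ closure (closure (W ∩ A)) := closure_mono this
      _ = closure (W ∩ A) := closure_closure
  have hEopen : ∀ V : Set Y, IsOpen V → IsOpen (E V) := by
    intro V hV
    obtain ⟨W, hWo, -, hEW⟩ := hW V hV
    rw [hEW]
    exact ExtremallyDisconnected.open_closure W hWo
  have hdisj : ∀ V₁ V₂ : Set Y, IsOpen V₁ → IsOpen V₂ → V₁ ∩ V₂ = ∅ →
      E V₁ ∩ E V₂ = ∅ := by
    intro V₁ V₂ h₁ h₂ hV
    obtain ⟨W₁, hW₁o, hW₁pre, hE₁⟩ := hW V₁ h₁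
    obtain ⟨W₂, hW₂o, hW₂pre, hE₂⟩ := hW V₂ h₂
    have hWW : W₁ ∩ W₂ = ∅ := by
      by_contra h
      obtain ⟨a, haA, haW⟩ := hA.inter_open_nonempty _ (hW₁o.inter hW₂o)
        (Set.nonempty_iff_ne_empty.mpr h)
      have h1 : g ⟨a, haW⟩ ∈ V₁ := by
        have : (⟨a, haW⟩ : A) ∈ (Subtype.val : A → X) ⁻¹' W₁ := haA.1
        rwa [hW₁pre] at this
      have h2 : g ⟨a, haW⟩ ∈ V₂ := by
        have : (⟨a, haW⟩ : A) ∈ (Subtype.val : A → X) ⁻¹' W₂ := haA.2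
        rwa [hW₂pre] at this
      exact absurd hV (Set.nonempty_iff_ne_empty.mp ⟨_, h1, h2⟩)
    have hc1 : closure W₁ ∩ W₂ = ∅ := by
      have h := hW₂o.closure_inter (s := W₁)
      rw [hWW, closure_empty] at h
      exact Set.subset_empty_iff.mp h
    have hc2 : closure W₁ ∩ closure W₂ = ∅ := by
      have hop : IsOpen (closure W₁) := ExtremallyDisconnected.open_closure W₁ hW₁o
      have h := hop.closure_inter (s := W₂)
      rw [Set.inter_comm W₂ (closure W₁), hc1, closure_empty] at h
      rw [Set.inter_comm]
      exact Set.subset_empty_iff.mp h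
    rw [hE₁, hE₂, hc2]
  -- uniqueness of cluster points
  have huniq : ∀ x y₁ y₂, ClusterPt y₁ (F x) → ClusterPt y₂ (F x) → y₁ = y₂ := by
    intro x y₁ y₂ h₁ h₂
    by_contra hne'
    obtain ⟨V₁, V₂, hV₁o, hV₂o, hy₁, hy₂, hVd⟩ := t2_separation hne'
    have hx₁ : x ∈ E V₁ := hmem x y₁ V₁ (hV₁o.mem_nhds hy₁) h₁
    have hx₂ : x ∈ E V₂ := hmem x y₂ V₂ (hV₂o.mem_nhds hy₂) h₂
    have : E V₁ ∩ E V₂ = ∅ := hdisj V₁ V₂ hV₁o hV₂o (Set.disjoint_iff_inter_eq_empty.mp hVd)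
    exact absurd this (Set.nonempty_iff_ne_empty.mp ⟨x, hx₁, hx₂⟩)
  -- define f
  choose f hfφ hfcl using hex
  refine ⟨f, ?_, hfφ, ?_⟩
  · rw [continuous_iff_continuousAt]
    intro x
    intro V hV
    obtain ⟨t, ht, htc, htV⟩ := exists_mem_nhds_isClosed_subset hV
    set V' := interior t with hV'
    have hV'o : IsOpen V' := isOpen_interior
    have hfx : f x ∈ V' := mem_interior_iff_mem_nhds.mpr ht
    have hxE : x ∈ E V' := hmem x (f x) V' (hV'o.mem_nhds hfx) (hfcl x)
    rw [Filter.mem_map]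
    refine Filter.mem_of_superset ((hEopen V' hV'o).mem_nhds hxE) ?_
    intro x' hx'
    have hft : f x' ∈ t := by
      by_contra hft
      have hx'' : x' ∈ E tᶜ := hmem x' (f x') tᶜ (htc.isOpen_compl.mem_nhds hft) (hfcl x')
      have : E V' ∩ E tᶜ = ∅ := by
        refine hdisj V' tᶜ hV'o htc.isOpen_compl ?_
        rw [Set.eq_empty_iff_forall_notMem]
        rintro y ⟨hy1, hy2⟩
        exact hy2 (interior_subset hy1)
      exact absurd this (Set.nonempty_iff_ne_empty.mp ⟨x', hx', hx''⟩)
    exact htV hft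
  · intro a
    have hna : Filter.comap (Subtype.val : A → X) (𝓝 (a : X)) = 𝓝 a := (nhds_induced _ _).symm
    have hcl : ClusterPt (g a) (F (a : X)) := by
      have : F (a : X) ≤ 𝓝 (g a) := by
        rw [hFdef]
        dsimp only
        rw [hna]
        exact hg.continuousAt
      exact ClusterPt.of_le_nhds this
    exact huniq (a : X) (f a) (g a) (hfcl a) hcl
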